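/- Assume p ∈ (0,1), m ≥ 2, and X, Y ∈ ℝ^{D×N} with Σ_X = X Xᵀ and Σ_Y = Y Yᵀ invertible. Fix α > 0 and define the teacher matrix Ω_T = α (Σ_X^{-1} x_1)(Σ_Y^{-1} y_1)ᵀ, where x_1, y_1 are the first columns of X, Y. Generate the random query token r = Σ_i a_i x_i with a_i i.i.d. Bernoulli(p) and random key tokens s_j = Σ_i b_{j,i} y_i for j = 1,…,m with b_{j,i} i.i.d. Bernoulli(p), all coefficients mutually independent. For any Ω ∈ ℝ^{D×D} define student logits ℓ_j^{(Ω)} = rᵀ Ω s_j and attention p_Ω(· | r, s_{1:m}) = softmax(ℓ_1^{(Ω)},…,ℓ_m^{(Ω)}), and teacher attention p_T = softmax(rᵀΩ_T s_1,…,rᵀΩ_T s_m). Define the population objective L(Ω) = E[ −Σ_{j=1}^m p_T(j | r,s_{1:m}) log p_Ω(j | r,s_{1:m}) ]. Then L(Ω) ≥ L(Ω_T) for every Ω ∈ ℝ^{D×D}, with equality if and only if Ω = Ω_T; i.e., Ω_T is the unique global minimizer of L. In particular the minimizer has rank 1, with left singular direction parallel to Σ_X^{-1} x_1 and right singular direction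 parallel to Σ_Y^{-1} y_1. -/

import Mathlib

open MeasureTheory ProbabilityTheory Matrix Finset

/-- The softmax function on `ℝ^m`. -/
noncomputable def softmax {m : ℕ} (a : Fin m → ℝ) : Fin m → ℝ :=
  fun i => Real.exp (a i) / ∑ k, Real.exp (a k)

lemma sum_exp_pos {m : ℕ} (hm : 0 < m) (a : Fin m → ℝ) : 0 < ∑ k, Real.exp (a k) := by
  have : Nonempty (Fin m) := ⟨⟨0, hm⟩⟩
  exact Finset.sum_pos (fun k _ => Real.exp_pos _) Finset.univ_nonempty

lemma softmax_pos {m : ℕ} (hm : 0 < m) (a : Fin m → ℝ) (i : Fin m) : 0 < softmax a i :=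
  div_pos (Real.exp_pos _) (sum_exp_pos hm a)

lemma softmax_sum {m : ℕ} (hm : 0 < m) (a : Fin m → ℝ) : ∑ i, softmax a i = 1 := by
  simp only [softmax]
  rw [← Finset.sum_div]
  exact div_self (sum_exp_pos hm a).ne'

lemma softmax_ratio {m : ℕ} (hm : 0 < m) {u v : Fin m → ℝ} (h : softmax u = softmax v)
    (j j' : Fin m) : u j - u j' = v j - v j' := by
  have h1 := congrFun h j
  have h2 := congrFun h j'
  have hu := (sum_exp_pos hm u).ne'
  have hv := (sum_exp_pos hm v).ne'
  simp only [softmax, div_eq_div_iff hu hv] at h1 h2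
  have key : Real.exp (u j) * Real.exp (v j') = Real.exp (v j) * Real.exp (u j') := by
    apply mul_right_cancel₀ hv
    calc Real.exp (u j) * Real.exp (v j') * ∑ k, Real.exp (v k)
        = (Real.exp (u j) * ∑ k, Real.exp (v k)) * Real.exp (v j') := by ring
      _ = (Real.exp (v j) * ∑ k, Real.exp (u k)) * Real.exp (v j') := by rw [h1]
      _ = Real.exp (v j) * (Real.exp (v j') * ∑ k, Real.exp (u k)) := by ring
      _ = Real.exp (v j) * (Real.exp (u j') * ∑ k, Real.exp (v k)) := by rw [← h2]
      _ = Real.exp (v j) * Real.exp (u j') * ∑ k, Real.exp (v k) := by ring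
  have := congrArg Real.log key
  rw [Real.log_mul (Real.exp_pos _).ne' (Real.exp_pos _).ne',
    Real.log_mul (Real.exp_pos _).ne' (Real.exp_pos _).ne', Real.log_exp, Real.log_exp,
    Real.log_exp, Real.log_exp] at this
  linarith

lemma gibbs {m : ℕ} (hm : 0 < m) (u v : Fin m → ℝ) :
    (-∑ j, softmax v j * Real.log (softmax v j)) ≤ (-∑ j, softmax v j * Real.log (softmax u j)) ∧
    ((-∑ j, softmax v j * Real.log (softmax u j)) = (-∑ j, softmax v j * Real.log (softmax v j))
      ↔ softmax u = softmax v) := by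
  set P := softmax v with hPdef
  set Q := softmax u with hQdef
  have hP : ∀ j, 0 < P j := softmax_pos hm v
  have hQ : ∀ j, 0 < Q j := softmax_pos hm u
  have hP1 : ∑ j, P j = 1 := softmax_sum hm v
  have hQ1 : ∑ j, Q j = 1 := softmax_sum hm u
  have hg : ∀ j : Fin m, 0 ≤ Q j - P j - P j * Real.log (Q j / P j) := by
    intro j
    have ht : 0 < Q j / P j := div_pos (hQ j) (hP j)
    have h1 := Real.log_le_sub_one_of_pos ht
    have h2 : P j * Real.log (Q j / P j) ≤ P j * (Q j / P j - 1) :=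
      mul_le_mul_of_nonneg_left h1 (hP j).le
    have h3 : P j * (Q j / P j - 1) = Q j - P j := by
      rw [mul_sub, mul_one, mul_comm (P j), div_mul_cancel₀ _ (hP j).ne']
    linarith
  have hsum : ∑ j, (Q j - P j - P j * Real.log (Q j / P j)) =
      (-∑ j, P j * Real.log (Q j)) - (-∑ j, P j * Real.log (P j)) := by
    have hterm : ∀ j : Fin m, Q j - P j - P j * Real.log (Q j / P j)
        = Q j - P j - (P j * Real.log (Q j) - P j * Real.log (P j)) := by
      intro j
      rw [Real.log_div (hQ j).ne' (hP j).ne']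
      ring
    rw [Finset.sum_congr rfl fun j _ => hterm j]
    rw [Finset.sum_sub_distrib, Finset.sum_sub_distrib, Finset.sum_sub_distrib, hP1, hQ1]
    ring
  have hnonneg : 0 ≤ ∑ j, (Q j - P j - P j * Real.log (Q j / P j)) :=
    Finset.sum_nonneg fun j _ => hg j
  rw [hsum] at hnonneg
  constructor
  · linarith
  constructor
  · intro heq
    have hzero : ∑ j, (Q j - P j - P j * Real.log (Q j / P j)) = 0 := by
      rw [hsum]; linarith
    have heach := (Finset.sum_eq_zero_iff_of_nonneg (fun j _ => hg j)).1 hzero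
    funext j
    show Q j = P j
    by_contra hne
    have ht : Q j / P j ≠ 1 := by
      intro h1
      rw [div_eq_one_iff_eq (hP j).ne'] at h1
      exact hne h1
    have h1 := Real.log_lt_sub_one_of_pos (div_pos (hQ j) (hP j)) ht
    have h2 : P j * Real.log (Q j / P j) < P j * (Q j / P j - 1) :=
      mul_lt_mul_of_pos_left h1 (hP j)
    have h3 : P j * (Q j / P j - 1) = Q j - P j := by
      rw [mul_sub, mul_one, mul_comm (P j), div_mul_cancel₀ _ (hP j).ne']
    have := heach j (Finset.mem_univ j)
    linarith
  · intro h; rw [h]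

/-- **The unique minimizer of the population attention objective is the rank-one teacher.**
With query `r = ∑ i a_i x_i` and keys `s_j = ∑ i b_{j,i} y_i` built from i.i.d. `Bernoulli(p)`
coefficients (`p ∈ (0,1)`, `m ≥ 2`), invertible Gram matrices `Σ_X = X Xᵀ`, `Σ_Y = Y Yᵀ`,
and teacher matrix `Ω_T = α (Σ_X⁻¹ x₁)(Σ_Y⁻¹ y₁)ᵀ` with `α > 0`, the population
cross-entropy objective `L(Ω) = E[−∑ⱼ p_T(j) log p_Ω(j)]` satisfies `L(Ω) ≥ L(Ω_T)`
for all `Ω`, with equality iff `Ω = Ω_T`:  `Ω_T` is the unique global minimizer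
(which is rank one, with singular directions `Σ_X⁻¹ x₁` and `Σ_Y⁻¹ y₁`). -/
theorem teacher_is_unique_population_minimizer
    {Ω : Type*} [MeasurableSpace Ω] (μ : Measure Ω) [IsProbabilityMeasure μ]
    {N D m : ℕ} (hN : 1 ≤ N) (hm : 2 ≤ m) (p : ℝ) (hp : p ∈ Set.Ioo (0 : ℝ) 1)
    (x y : Fin N → Fin D → ℝ)
    (X : Matrix (Fin D) (Fin N) ℝ) (hX : X = Matrix.of fun k i => x i k)
    (Y : Matrix (Fin D) (Fin N) ℝ) (hY : Y = Matrix.of fun k i => y i k)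
    (hXinv : IsUnit (X * Xᵀ).det) (hYinv : IsUnit (Y * Yᵀ).det)
    (α : ℝ) (hα : 0 < α)
    (OmT : Matrix (Fin D) (Fin D) ℝ)
    (hOmT : OmT = α • Matrix.vecMulVec
      ((X * Xᵀ)⁻¹ *ᵥ x ⟨0, by omega⟩) ((Y * Yᵀ)⁻¹ *ᵥ y ⟨0, by omega⟩))
    -- Bernoulli(p) coefficients, all mutually independent
    (a : Fin N → Ω → ℝ) (b : Fin m → Fin N → Ω → ℝ)
    (hameas : ∀ i, Measurable (a i)) (hbmeas : ∀ j i, Measurable (b j i))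
    (ha01 : ∀ i ω, a i ω = 0 ∨ a i ω = 1) (hb01 : ∀ j i ω, b j i ω = 0 ∨ b j i ω = 1)
    (haBer : ∀ i, μ {ω | a i ω = 1} = ENNReal.ofReal p)
    (hbBer : ∀ j i, μ {ω | b j i ω = 1} = ENNReal.ofReal p)
    (hindep : iIndepFun
      (Sum.elim (fun i => a i) (fun ji : Fin m × Fin N => b ji.1 ji.2) :
        Fin N ⊕ Fin m × Fin N → Ω → ℝ) μ)
    -- tokens
    (r : Ω → Fin D → ℝ) (hr : r = fun ω k => ∑ i, a i ω * x i k)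
    (s : Fin m → Ω → Fin D → ℝ) (hs : s = fun j ω k => ∑ i, b j i ω * y i k)
    -- population objective
    (L : Matrix (Fin D) (Fin D) ℝ → ℝ)
    (hL : ∀ Om : Matrix (Fin D) (Fin D) ℝ, L Om =
      ∫ ω, -∑ j, softmax (fun j' => r ω ⬝ᵥ (OmT *ᵥ s j' ω)) j *
        Real.log (softmax (fun j' => r ω ⬝ᵥ (Om *ᵥ s j' ω)) j) ∂μ) :
    ∀ Om : Matrix (Fin D) (Fin D) ℝ, L OmT ≤ L Om ∧ (L Om = L OmT ↔ Om = OmT) := by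
  intro Om
  have hm0 : 0 < m := by omega
  set c : Fin N ⊕ Fin m × Fin N → Ω → ℝ :=
    Sum.elim (fun i => a i) (fun ji : Fin m × Fin N => b ji.1 ji.2) with hc
  have hcmeas : ∀ k, Measurable (c k) := by
    rintro (i | ⟨j, i⟩)
    · exact hameas i
    · exact hbmeas j i
  have hc01 : ∀ k ω, c k ω = 0 ∨ c k ω = 1 := by
    rintro (i | ⟨j, i⟩) ω
    · exact ha01 i ω
    · exact hb01 j i ω
  set val : Bool → ℝ := fun t => if t then 1 else 0 with hval
  have hvalinj : ∀ s t : Bool, val s = val t → s = t := by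
    rintro (_|_) (_|_) h <;> simp [hval] at h ⊢
  set E : ((Fin N ⊕ Fin m × Fin N) → Bool) → Set Ω :=
    fun v => ⋂ k ∈ (Finset.univ : Finset (Fin N ⊕ Fin m × Fin N)), c k ⁻¹' {val (v k)} with hE
  have hmeasE : ∀ v, MeasurableSet (E v) := by
    intro v
    exact MeasurableSet.biInter (Set.to_countable _)
      (fun k _ => (hcmeas k) (measurableSet_singleton _))
  have hmem : ∀ v ω, ω ∈ E v ↔ ∀ k, c k ω = val (v k) := by
    intro v ω; simp [hE]
  have hone : ∀ k, μ (c k ⁻¹' {(1:ℝ)}) = ENNReal.ofReal p := by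
    rintro (i | ⟨j, i⟩)
    · have : c (Sum.inl i) ⁻¹' {(1:ℝ)} = {ω | a i ω = 1} := by ext ω; simp [hc]
      rw [this, haBer i]
    · have : c (Sum.inr (j, i)) ⁻¹' {(1:ℝ)} = {ω | b j i ω = 1} := by ext ω; simp [hc]
      rw [this, hbBer j i]
  have hzero : ∀ k, μ (c k ⁻¹' {(0:ℝ)}) = 1 - ENNReal.ofReal p := by
    intro k
    have hsplit : c k ⁻¹' {(0:ℝ)} = (c k ⁻¹' {(1:ℝ)})ᶜ := by
      ext ω
      simp only [Set.mem_preimage, Set.mem_singleton_iff, Set.mem_compl_iff]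
      rcases hc01 k ω with h | h <;> simp [h]
    rw [hsplit, measure_compl ((hcmeas k) (measurableSet_singleton _)) (measure_ne_top μ _),
      measure_univ, hone k]
  have hfacpos : ∀ k (t : Bool), 0 < μ (c k ⁻¹' {val t}) := by
    intro k t
    cases t
    · have : val false = (0:ℝ) := by simp [hval]
      rw [this, hzero k]
      have h1 : ENNReal.ofReal p < 1 := by
        rw [← ENNReal.ofReal_one]
        exact (ENNReal.ofReal_lt_ofReal_iff one_pos).2 hp.2
      exact tsub_pos_of_lt h1
    · have : val true = (1:ℝ) := by simp [hval]
      rw [this, hone k]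
      exact ENNReal.ofReal_pos.2 hp.1
  have hμE : ∀ v, μ (E v) = ∏ k, μ (c k ⁻¹' {val (v k)}) := by
    intro v
    exact hindep.measure_inter_preimage_eq_mul Finset.univ
      (sets := fun k => {val (v k)}) (fun k _ => measurableSet_singleton _)
  have hEpos : ∀ v, 0 < (μ (E v)).toReal := by
    intro v
    refine ENNReal.toReal_pos ?_ (measure_ne_top μ _)
    rw [hμE v]
    rw [Finset.prod_ne_zero_iff]
    exact fun k _ => (hfacpos k (v k)).ne'
  -- pattern token values
  set R : ((Fin N ⊕ Fin m × Fin N) → Bool) → Fin D → ℝ :=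
    fun v k => ∑ i, val (v (Sum.inl i)) * x i k with hR
  set S : ((Fin N ⊕ Fin m × Fin N) → Bool) → Fin m → Fin D → ℝ :=
    fun v j k => ∑ i, val (v (Sum.inr (j, i))) * y i k with hS
  set lg : Matrix (Fin D) (Fin D) ℝ → ((Fin N ⊕ Fin m × Fin N) → Bool) → Fin m → ℝ :=
    fun Q v j => R v ⬝ᵥ (Q *ᵥ S v j) with hlg
  set G : Matrix (Fin D) (Fin D) ℝ → ((Fin N ⊕ Fin m × Fin N) → Bool) → ℝ :=
    fun Q v => -∑ j, softmax (lg OmT v) j * Real.log (softmax (lg Q v) j) with hG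
  have hrs : ∀ v ω, ω ∈ E v → r ω = R v ∧ ∀ j, s j ω = S v j := by
    intro v ω hω
    rw [hmem] at hω
    constructor
    · funext k
      rw [hr, hR]
      exact Finset.sum_congr rfl fun i _ => by rw [← hω (Sum.inl i)]; rfl
    · intro j
      funext k
      rw [hs, hS]
      exact Finset.sum_congr rfl fun i _ => by rw [← hω (Sum.inr (j, i))]; rfl
  have hpoint : ∀ (Q : Matrix (Fin D) (Fin D) ℝ) (ω : Ω),
      (-∑ j, softmax (fun j' => r ω ⬝ᵥ (OmT *ᵥ s j' ω)) j *
          Real.log (softmax (fun j' => r ω ⬝ᵥ (Q *ᵥ s j' ω)) j))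
      = ∑ v : (Fin N ⊕ Fin m × Fin N) → Bool, (E v).indicator (fun _ => G Q v) ω := by
    intro Q ω
    set v₀ : (Fin N ⊕ Fin m × Fin N) → Bool := fun k => decide (c k ω = 1) with hv₀
    have hωmem : ω ∈ E v₀ := by
      rw [hmem]
      intro k
      rcases hc01 k ω with h | h <;> simp [hv₀, h, hval]
    rw [Finset.sum_eq_single v₀]
    · rw [Set.indicator_of_mem hωmem]
      obtain ⟨hrv, hsv⟩ := hrs v₀ ω hωmem
      have hl : ∀ (M : Matrix (Fin D) (Fin D) ℝ),
          (fun j' => r ω ⬝ᵥ (M *ᵥ s j' ω)) = lg M v₀ := by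
        intro M; funext j'; rw [hlg, hrv, hsv j']
      rw [hG, hl OmT, hl Q]
    · intro v _ hv
      apply Set.indicator_of_notMem
      intro hωv
      apply hv
      funext k
      exact hvalinj _ _ (((hmem v ω).1 hωv k).symm.trans ((hmem v₀ ω).1 hωmem k))
    · intro h; exact absurd (Finset.mem_univ v₀) h
  have hint : ∀ Q : Matrix (Fin D) (Fin D) ℝ, L Q = ∑ v, G Q v * (μ (E v)).toReal := by
    intro Q
    rw [hL Q]
    rw [integral_congr_ae (Filter.Eventually.of_forall (hpoint Q))]
    rw [integral_finset_sum _ (fun v _ => (integrable_const (G Q v)).indicator (hmeasE v))]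
    refine Finset.sum_congr rfl fun v _ => ?_
    rw [integral_indicator_const _ (hmeasE v), smul_eq_mul, mul_comm]
    rfl
  have hGv : ∀ v, G OmT v ≤ G Om v := by
    intro v
    exact (gibbs hm0 (lg Om v) (lg OmT v)).1
  have hineq : L OmT ≤ L Om := by
    rw [hint OmT, hint Om]
    exact Finset.sum_le_sum fun v _ => mul_le_mul_of_nonneg_right (hGv v) (hEpos v).le
  refine ⟨hineq, ?_, fun h => by rw [h]⟩
  intro heq
  have hzero' : ∑ v, (G Om v - G OmT v) * (μ (E v)).toReal = 0 := by
    have h1 := hint Om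
    have h2 := hint OmT
    rw [heq] at h1
    have := h1.symm.trans h2
    simp only [sub_mul, Finset.sum_sub_distrib]
    linarith
  have heach : ∀ v, G Om v = G OmT v := by
    intro v
    have h := (Finset.sum_eq_zero_iff_of_nonneg
      (fun v _ => mul_nonneg (sub_nonneg.2 (hGv v)) (hEpos v).le)).1 hzero' v (Finset.mem_univ v)
    have h2 := (mul_eq_zero.1 h).resolve_right (hEpos v).ne'
    linarith
  have hsm : ∀ v, softmax (lg Om v) = softmax (lg OmT v) := by
    intro v
    exact (gibbs hm0 (lg Om v) (lg OmT v)).2.1 (heach v)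
  -- extract matrix entries
  have hMe : ∀ (i k : Fin N), x i ⬝ᵥ ((Om - OmT) *ᵥ y k) = 0 := by
    intro i k
    set v : (Fin N ⊕ Fin m × Fin N) → Bool := fun t => match t with
      | Sum.inl i' => decide (i' = i)
      | Sum.inr (j, i') => decide (j = (⟨0, hm0⟩ : Fin m) ∧ i' = k) with hv
    have hRv : R v = x i := by
      funext d
      show (∑ i' : Fin N, val (v (Sum.inl i')) * x i' d) = x i d
      rw [Finset.sum_eq_single i]
      · simp [hv, hval]
      · intro i' _ hne; simp [hv, hval, hne]
      · intro h; exact absurd (Finset.mem_univ i) h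
    have hSv0 : S v ⟨0, hm0⟩ = y k := by
      funext d
      show (∑ i' : Fin N, val (v (Sum.inr (⟨0, hm0⟩, i'))) * y i' d) = y k d
      rw [Finset.sum_eq_single k]
      · simp [hv, hval]
      · intro i' _ hne; simp [hv, hval, hne]
      · intro h; exact absurd (Finset.mem_univ k) h
    have hSv1 : S v ⟨1, by omega⟩ = 0 := by
      funext d
      show (∑ i' : Fin N, val (v (Sum.inr (⟨1, by omega⟩, i'))) * y i' d) = (0 : ℝ)
      have : ∀ i' : Fin N, val (v (Sum.inr (⟨1, by omega⟩, i'))) * y i' d = 0 := by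
        intro i'
        have hne : (⟨1, by omega⟩ : Fin m) ≠ ⟨0, hm0⟩ := by
          intro h; exact absurd (congrArg Fin.val h) (by simp)
        simp [hv, hval, hne]
      rw [Finset.sum_congr rfl fun i' _ => this i']
      simp
    have hd := softmax_ratio hm0 (hsm v) ⟨0, hm0⟩ ⟨1, by omega⟩
    rw [hlg] at hd
    simp only [hRv, hSv0, hSv1, Matrix.mulVec_zero, dotProduct_zero, sub_zero] at hd
    rw [Matrix.sub_mulVec, dotProduct_sub]
    linarith
  have hM : Xᵀ * (Om - OmT) * Y = 0 := by
    ext i k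
    have h := hMe i k
    simp only [Matrix.mul_apply, Matrix.transpose_apply, Matrix.zero_apply, hX, hY,
      Matrix.of_apply, dotProduct, Matrix.mulVec, Finset.sum_mul, Finset.mul_sum] at h ⊢
    rw [← h]
    rw [Finset.sum_comm]
    exact Finset.sum_congr rfl fun d _ => Finset.sum_congr rfl fun e _ => by ring
  have key : ∀ Mt : Matrix (Fin D) (Fin D) ℝ,
      (X * Xᵀ)⁻¹ * ((X * Xᵀ) * Mt * (Y * Yᵀ)) * (Y * Yᵀ)⁻¹ = Mt := by
    intro Mt
    rw [Matrix.mul_assoc (X * Xᵀ) Mt (Y * Yᵀ),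
      ← Matrix.mul_assoc ((X * Xᵀ)⁻¹) (X * Xᵀ) (Mt * (Y * Yᵀ)),
      Matrix.nonsing_inv_mul _ hXinv, Matrix.one_mul,
      Matrix.mul_assoc Mt (Y * Yᵀ) ((Y * Yᵀ)⁻¹),
      Matrix.mul_nonsing_inv _ hYinv, Matrix.mul_one]
  have hz : (X * Xᵀ) * (Om - OmT) * (Y * Yᵀ) = 0 := by
    calc (X * Xᵀ) * (Om - OmT) * (Y * Yᵀ)
        = X * (Xᵀ * (Om - OmT) * Y) * Yᵀ := by
          simp only [Matrix.mul_assoc]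
      _ = 0 := by rw [hM]; simp
  have hfin : Om - OmT = 0 := by
    rw [← key (Om - OmT), hz]
    simp
  exact sub_eq_zero.1 hfin
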